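/- Let A be a commutative unital C*-algebra that is not finitely generated as a C*-algebra, i.e. no finite set of self-adjoint elements generates A as a C*-algebra. Then the following three cardinals coincide: (a) the least cardinality of a dense subset of A (sInf of Cardinal.mk s over sets s ⊆ A with Dense s); (b) the least cardinality of a set S of self-adjoint elements that generates A as a C*-algebra; (c) the least cardinality of a topological basis of the character space Δ(A) (sInf of Cardinal.mk 𝔅 over families 𝔅 of open sets with IsTopologicalBasis 𝔅). -/

import Mathlib

open Topology WeakDual

universe u

section Aux
open Cardinal TopologicalSpace
variable {A : Type u} [CommCStarAlgebra A]

lemma mem_adjoin_of_parts (S : Set A) (a : A) (hx : a + star a ∈ Algebra.adjoin ℂ S)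
    (hy : Complex.I • (star a - a) ∈ Algebra.adjoin ℂ S) : a ∈ Algebra.adjoin ℂ S := by
  have key : (2⁻¹ : ℂ) • ((a + star a) + Complex.I • (Complex.I • (star a - a))) = a := by
    rw [smul_smul, Complex.I_mul_I, neg_one_smul, neg_sub]
    have h2 : (a + star a) + (a - star a) = (2 : ℂ) • a := by
      rw [two_smul]; abel
    rw [h2, smul_smul]; norm_num
  have := Subalgebra.smul_mem _ (Subalgebra.add_mem _ hx (Subalgebra.smul_mem _ hy Complex.I)) (2⁻¹ : ℂ)
  rwa [key] at this

lemma exists_finite_gen_of_finiteDimensional [FiniteDimensional ℂ A] :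
    ∃ S : Set A, S.Finite ∧ (∀ a ∈ S, IsSelfAdjoint a) ∧
      (Algebra.adjoin ℂ S).topologicalClosure = ⊤ := by
  let b := Module.finBasis ℂ A
  refine ⟨(Set.range fun i => b i + star (b i)) ∪
      (Set.range fun i => Complex.I • (star (b i) - b i)), ?_, ?_, ?_⟩
  · exact (Set.finite_range _).union (Set.finite_range _)
  · rintro a (⟨i, rfl⟩ | ⟨i, rfl⟩)
    · rw [IsSelfAdjoint, star_add, star_star]; exact add_comm _ _
    · rw [IsSelfAdjoint, star_smul, star_sub, star_star, Complex.star_def, Complex.conj_I,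
        neg_smul, ← smul_neg, neg_sub]
  · have hadj : Algebra.adjoin ℂ ((Set.range fun i => b i + star (b i)) ∪
        (Set.range fun i => Complex.I • (star (b i) - b i))) = ⊤ := by
      rw [eq_top_iff]
      intro a _
      have hb : ∀ i, b i ∈ Algebra.adjoin ℂ ((Set.range fun i => b i + star (b i)) ∪
          (Set.range fun i => Complex.I • (star (b i) - b i))) := fun i =>
        mem_adjoin_of_parts _ _ (Algebra.subset_adjoin (Or.inl ⟨i, rfl⟩))
          (Algebra.subset_adjoin (Or.inr ⟨i, rfl⟩))
      have hspan : (⊤ : Submodule ℂ A) ≤ Subalgebra.toSubmodule (Algebra.adjoin ℂ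
          ((Set.range fun i => b i + star (b i)) ∪
            (Set.range fun i => Complex.I • (star (b i) - b i)))) := by
        rw [← b.span_eq]
        exact Submodule.span_le.2 (Set.range_subset_iff.2 hb)
      exact hspan trivial
    rw [hadj, eq_top_iff]
    exact le_trans (le_of_eq rfl) (Subalgebra.le_topologicalClosure ⊤)

-- nonempty of G
lemma gen_nonempty : ∃ S : Set A, (∀ a ∈ S, IsSelfAdjoint a) ∧
    (Algebra.adjoin ℂ S).topologicalClosure = ⊤ := by
  refine ⟨{a : A | IsSelfAdjoint a}, fun a h => h, ?_⟩
  have hadj : Algebra.adjoin ℂ {a : A | IsSelfAdjoint a} = ⊤ := by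
    rw [eq_top_iff]; intro a _
    refine mem_adjoin_of_parts _ _ (Algebra.subset_adjoin ?_) (Algebra.subset_adjoin ?_)
    · rw [Set.mem_setOf_eq, IsSelfAdjoint, star_add, star_star]; exact add_comm _ _
    · rw [Set.mem_setOf_eq, IsSelfAdjoint, star_smul, star_sub, star_star, Complex.star_def,
        Complex.conj_I, neg_smul, ← smul_neg, neg_sub]
  rw [hadj, eq_top_iff]
  exact le_trans (le_of_eq rfl) (Subalgebra.le_topologicalClosure ⊤)

lemma finiteDimensional_of_finite_characterSpace (h : Finite (characterSpace ℂ A)) :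
    FiniteDimensional ℂ A := by
  set X := characterSpace ℂ A
  haveI := h
  haveI : DiscreteTopology X := inferInstance
  let e := gelfandStarTransform A
  let L : A →ₗ[ℂ] (X → ℂ) :=
    { toFun := fun a => ⇑(e a)
      map_add' := fun a b => by simp [map_add]
      map_smul' := fun c a => by simp [map_smul] }
  haveI : FiniteDimensional ℂ (X → ℂ) := inferInstance
  refine FiniteDimensional.of_injective L ?_
  intro a b hab
  apply e.injective
  ext x
  exact congrFun hab x

lemma finite_of_finite_basis {X : Type v} [TopologicalSpace X] [T1Space X]
    {𝔅 : Set (Set X)} (hB : TopologicalSpace.IsTopologicalBasis 𝔅) (hfin : 𝔅.Finite) :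
    Finite X := by
  haveI := hfin.to_subtype
  refine Finite.of_injective (fun x : X => {U : 𝔅 | x ∈ (U : Set X)}) ?_
  intro x y hxy
  by_contra hne
  obtain ⟨V, hV𝔅, hxV, hVsub⟩ := hB.exists_subset_of_mem_open
    (show x ∈ ({y}ᶜ : Set X) from hne) (isOpen_compl_singleton)
  have h1 : (⟨V, hV𝔅⟩ : 𝔅) ∈ {U : 𝔅 | x ∈ (U : Set X)} := hxV
  simp only at hxy
  rw [hxy] at h1
  exact hVsub h1 rfl

lemma denseRange_ratComplex :
    DenseRange (fun p : ℚ × ℚ => ((p.1 : ℂ) + (p.2 : ℂ) * Complex.I)) := by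
  have h1 : DenseRange (fun p : ℚ × ℚ => ((p.1 : ℝ), (p.2 : ℝ))) :=
    Rat.denseRange_cast.prodMap Rat.denseRange_cast
  have h2 : (fun p : ℚ × ℚ => ((p.1 : ℂ) + (p.2 : ℂ) * Complex.I)) =
      (fun q : ℝ × ℝ => Complex.equivRealProd.symm q) ∘ (fun p : ℚ × ℚ => ((p.1 : ℝ), (p.2 : ℝ))) := by
    funext p
    simp [Complex.equivRealProd, Complex.ext_iff]
  rw [h2]
  exact (Function.Surjective.denseRange (Equiv.surjective _)).comp h1
    Complex.equivRealProdCLM.symm.continuous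

lemma exists_dense_of_gen (S : Set A)
    (hgen : (Algebra.adjoin ℂ S).topologicalClosure = ⊤) (hinf : ℵ₀ ≤ #S) :
    ∃ s : Set A, Dense s ∧ #s ≤ #S := by
  classical
  set s₀ : Set A := S ∪ Set.range (fun p : ℚ × ℚ =>
    algebraMap ℂ A ((p.1 : ℂ) + (p.2 : ℂ) * Complex.I)) with hs₀
  set R : Subalgebra ℤ A := Algebra.adjoin ℤ s₀ with hR
  have hcont : Continuous (algebraMap ℂ A) := by
    have : (algebraMap ℂ A) = fun z : ℂ => z • (1 : A) := by
      funext z; rw [Algebra.algebraMap_eq_smul_one]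
    rw [this]
    exact continuous_id.smul continuous_const
  have halg : ∀ z : ℂ, algebraMap ℂ A z ∈ R.topologicalClosure := by
    intro z
    have hz : z ∈ closure (Set.range (fun p : ℚ × ℚ => ((p.1 : ℂ) + (p.2 : ℂ) * Complex.I))) :=
      denseRange_ratComplex z
    have : algebraMap ℂ A z ∈ (algebraMap ℂ A) '' closure (Set.range
        (fun p : ℚ × ℚ => ((p.1 : ℂ) + (p.2 : ℂ) * Complex.I))) := ⟨z, hz, rfl⟩
    have h2 := (image_closure_subset_closure_image hcont) this
    refine closure_mono ?_ h2
    rintro _ ⟨_, ⟨p, rfl⟩, rfl⟩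
    exact Algebra.subset_adjoin (Or.inr ⟨p, rfl⟩)
  let K : Subalgebra ℂ A :=
    { toSubsemiring := R.topologicalClosure.toSubsemiring
      algebraMap_mem' := halg }
  have hK : (Algebra.adjoin ℂ S).topologicalClosure ≤ K := by
    refine Subalgebra.topologicalClosure_minimal ?_ ?_
    · exact Algebra.adjoin_le fun a ha =>
        R.le_topologicalClosure (Algebra.subset_adjoin (Or.inl ha))
    · exact R.isClosed_topologicalClosure
  rw [hgen] at hK
  refine ⟨(R : Set A), ?_, ?_⟩
  · rw [dense_iff_closure_eq]
    have : closure (R : Set A) = (R.topologicalClosure : Set A) := rfl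
    rw [this]
    rw [Set.eq_univ_iff_forall]
    exact fun a => hK (show a ∈ (⊤ : Subalgebra ℂ A) from trivial)
  · have h1 := Algebra.lift_cardinalMk_adjoin_le ℤ s₀
    rw [Cardinal.lift_id'] at h1
    have hZ : Cardinal.lift.{u} #ℤ = ℵ₀ := by simp
    have hrange : #(Set.range (fun p : ℚ × ℚ =>
        algebraMap ℂ A ((p.1 : ℂ) + (p.2 : ℂ) * Complex.I))) ≤ ℵ₀ := by
      have := mk_range_le_lift (f := fun p : ℚ × ℚ =>
        algebraMap ℂ A ((p.1 : ℂ) + (p.2 : ℂ) * Complex.I))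
      rw [Cardinal.lift_id'] at this
      refine le_trans this ?_
      simp
    have hs₀card : #s₀ ≤ #S := by
      refine le_trans (mk_union_le _ _) ?_
      exact Cardinal.add_le_of_le hinf le_rfl (le_trans hrange hinf)
    calc #(R : Set A) ≤ Cardinal.lift.{u} #ℤ ⊔ #s₀ ⊔ ℵ₀ := by simpa using h1
      _ ≤ #S := by
            rw [hZ]
            exact sup_le (sup_le hinf hs₀card) hinf

variable [Nontrivial A]

lemma char_norm_apply_le (x : characterSpace ℂ A) (c : A) : ‖x c‖ ≤ ‖c‖ :=
  spectrum.norm_le_norm_of_mem (WeakDual.CharacterSpace.apply_mem_spectrum x c)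

lemma exists_basis_of_dense (s : Set A) (hs : Dense s) (hinf : ℵ₀ ≤ #s) :
    ∃ 𝔅 : Set (Set (characterSpace ℂ A)), IsTopologicalBasis 𝔅 ∧ #𝔅 ≤ #s := by
  classical
  set X := characterSpace ℂ A with hX
  obtain ⟨B, hBc, -, hBb⟩ := exists_countable_basis ℂ
  set ev : A → X → ℂ := fun a x => x a with hev
  have hevc : ∀ a : A, Continuous (ev a) := fun a =>
    (WeakDual.eval_continuous a).comp continuous_subtype_val
  set 𝒮 : Set (Set X) := Set.image2 (fun (a : A) (U : Set ℂ) => ev a ⁻¹' U) s B with h𝒮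
  have h1 : (inferInstance : TopologicalSpace X) ≤ generateFrom 𝒮 := le_generateFrom (by
    rintro _ ⟨a, ha, U, hU, rfl⟩
    exact (hBb.isOpen hU).preimage (hevc a))
  have hT2 : @T2Space X (generateFrom 𝒮) := by
    refine @T2Space.mk X (generateFrom 𝒮) ?_
    intro x y hxy
    have hxyb : ∃ b : A, x b ≠ y b := by
      by_contra h
      push_neg at h
      exact hxy (Subtype.ext (ContinuousLinearMap.ext fun a => h a))
    obtain ⟨b, hb⟩ := hxyb
    have hε : (0 : ℝ) < dist (x b) (y b) := dist_pos.mpr hb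
    obtain ⟨a, haball, ha⟩ := (Metric.dense_iff.mp hs) b (dist (x b) (y b) / 4) (by linarith)
    have hab : dist a b < dist (x b) (y b) / 4 := Metric.mem_ball.mp haball
    have key : ∀ z : X, dist (z a) (z b) < dist (x b) (y b) / 4 := by
      intro z
      have : dist (z a) (z b) ≤ dist a b := by
        rw [dist_eq_norm, dist_eq_norm, ← map_sub z a b]
        exact char_norm_apply_le z (a - b)
      linarith
    have hne : ev a x ≠ ev a y := by
      intro heq
      have h0 : dist (x a) (y a) = 0 := by
        rw [show x a = y a from heq, dist_self]
      linarith [dist_triangle4 (x b) (x a) (y a) (y b), key x, key y,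
        dist_comm (x b) (x a), dist_comm (y a) (y b)]
    obtain ⟨U, V, hU, hV, hxU, hyV, hUV⟩ := t2_separation hne
    obtain ⟨U', hU'B, hxU', hU'sub⟩ := hBb.exists_subset_of_mem_open hxU hU
    obtain ⟨V', hV'B, hyV', hV'sub⟩ := hBb.exists_subset_of_mem_open hyV hV
    refine ⟨ev a ⁻¹' U', ev a ⁻¹' V', ?_, ?_, hxU', hyV', ?_⟩
    · exact isOpen_generateFrom_of_mem ⟨a, ha, U', hU'B, rfl⟩
    · exact isOpen_generateFrom_of_mem ⟨a, ha, V', hV'B, rfl⟩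
    · exact (hUV.mono hU'sub hV'sub).preimage (ev a)
  have hcont : @Continuous X X _ (generateFrom 𝒮) id := continuous_id_iff_le.mpr h1
  have hcm : @IsClosedMap X X _ (generateFrom 𝒮) id :=
    @Continuous.isClosedMap X X _ (generateFrom 𝒮) inferInstance hT2 id hcont
  have h2 : generateFrom 𝒮 ≤ (inferInstance : TopologicalSpace X) := by
    rw [TopologicalSpace.le_def]
    intro O hO
    have hc : @IsClosed X (generateFrom 𝒮) Oᶜ := by
      have := hcm Oᶜ ((@isClosed_compl_iff X _ O).mpr hO)
      simpa [Set.image_id] using this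
    exact (@isClosed_compl_iff X (generateFrom 𝒮) O).mp hc
  have htop : (inferInstance : TopologicalSpace X) = generateFrom 𝒮 := le_antisymm h1 h2
  refine ⟨(fun f => ⋂₀ f) '' { f : Set (Set X) | f.Finite ∧ f ⊆ 𝒮 },
    isTopologicalBasis_of_subbasis htop, ?_⟩
  have hSc : #𝒮 ≤ #s := by
    have hsurj : Function.Surjective (fun p : ↥s × ↥B =>
        (⟨ev p.1 ⁻¹' p.2, Set.mem_image2_of_mem p.1.2 p.2.2⟩ : ↥𝒮)) := by
      rintro ⟨_, a, ha, U, hU, rfl⟩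
      exact ⟨(⟨a, ha⟩, ⟨U, hU⟩), rfl⟩
    refine le_trans (Cardinal.mk_le_of_surjective hsurj) ?_
    have hB' : #B ≤ ℵ₀ := Cardinal.mk_le_aleph0_iff.mpr hBc
    calc #(↥s × ↥B) = Cardinal.lift.{0} #↥s * Cardinal.lift.{u} #↥B := by rw [Cardinal.mk_prod]
      _ ≤ #↥s * ℵ₀ := by
            rw [Cardinal.lift_uzero]
            gcongr
            refine le_trans (Cardinal.lift_le.mpr hB') ?_
            simp
      _ ≤ #↥s * #↥s := by gcongr
      _ = #↥s := Cardinal.mul_eq_self hinf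
  have hfin : #({ f : Set (Set X) | f.Finite ∧ f ⊆ 𝒮 }) ≤ #↥s := by
    have hsurj : Function.Surjective (fun t : Finset ↥𝒮 =>
        (⟨Subtype.val '' (t : Set ↥𝒮), (t.finite_toSet.image _), by
          rintro _ ⟨U, _, rfl⟩; exact U.2⟩ : ↥{ f : Set (Set X) | f.Finite ∧ f ⊆ 𝒮 })) := by
      rintro ⟨f, hf, hsub⟩
      have hu : (Subtype.val ⁻¹' f : Set ↥𝒮).Finite :=
        hf.preimage (Set.injOn_of_injective Subtype.val_injective)
      refine ⟨hu.toFinset, ?_⟩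
      ext1
      simp only [Set.Finite.coe_toFinset]
      ext U
      constructor
      · rintro ⟨⟨V, hV⟩, hVf, rfl⟩
        exact hVf
      · intro hU
        exact ⟨⟨U, hsub hU⟩, hU, rfl⟩
    refine le_trans (Cardinal.mk_le_of_surjective hsurj) ?_
    rcases finite_or_infinite ↥𝒮 with hF | hI
    · haveI := hF
      haveI := Fintype.ofFinite ↥𝒮
      exact le_trans (le_of_lt (Cardinal.lt_aleph0_of_finite _)) hinf
    · haveI := hI
      rw [Cardinal.mk_finset_of_infinite]
      exact hSc
  exact le_trans Cardinal.mk_image_le hfin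

lemma exists_gen_of_basis (𝔅 : Set (Set (characterSpace ℂ A)))
    (hB : IsTopologicalBasis 𝔅) (hinf : ℵ₀ ≤ #𝔅) :
    ∃ S : Set A, (∀ a ∈ S, IsSelfAdjoint a) ∧
      (Algebra.adjoin ℂ S).topologicalClosure = ⊤ ∧ #S ≤ #𝔅 := by
  classical
  set P := {p : Set (characterSpace ℂ A) × Set (characterSpace ℂ A) //
    p.1 ∈ 𝔅 ∧ p.2 ∈ 𝔅 ∧ closure p.1 ⊆ p.2} with hP
  have hUry : ∀ p : P, ∃ f : C(characterSpace ℂ A, ℝ), Set.EqOn f 0 (closure p.1.1) ∧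
      Set.EqOn f 1 (p.1.2)ᶜ ∧ ∀ x, f x ∈ Set.Icc (0:ℝ) 1 := fun p =>
    exists_continuous_zero_one_of_isClosed isClosed_closure
      (hB.isOpen p.2.2.1).isClosed_compl
      (by simpa [Set.disjoint_compl_right_iff_subset] using p.2.2.2)
  choose f hf0 hf1 _hf01 using hUry
  set g : P → C(characterSpace ℂ A, ℂ) :=
    fun p => (⟨Complex.ofReal, Complex.continuous_ofReal⟩ : C(ℝ, ℂ)).comp (f p) with hg
  set φ := gelfandTransform ℂ A with hφ
  have hbij : Function.Bijective ⇑φ := gelfandTransform_bijective A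
  have hiso : Isometry ⇑φ := gelfandTransform_isometry A
  set S : Set A := ⇑φ ⁻¹' (Set.range g) with hS
  have hsa : ∀ a ∈ S, IsSelfAdjoint a := by
    rintro a ⟨p, hp⟩
    have hstar : φ (star a) = φ a := by
      rw [gelfandTransform_map_star, ← hp]
      ext x
      simp [hg, Complex.conj_ofReal]
    exact hbij.injective hstar
  -- image of S is range g
  have himg : ⇑φ '' S = Set.range g := Set.image_preimage_eq_of_subset
    (by rw [Set.range_subset_iff]; exact fun p => hbij.surjective (g p))
  have hreal : ∀ p : P, star (g p) = g p := by
    intro p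
    ext x
    simp [hg, Complex.conj_ofReal]
  have hstar_eq : Set.range g ∪ star (Set.range g) = Set.range g := by
    refine Set.union_eq_self_of_subset_right ?_
    rintro h hh
    rw [Set.mem_star] at hh
    obtain ⟨p, hp⟩ := hh
    exact ⟨p, by rw [← hreal p, hp, star_star]⟩
  -- Stone-Weierstrass
  have hsep : (StarAlgebra.adjoin ℂ (Set.range g)).SeparatesPoints := by
    intro x y hxy
    obtain ⟨V, hV𝔅, hxV, hVsub⟩ := hB.exists_subset_of_mem_open
      (show x ∈ ({y}ᶜ : Set (characterSpace ℂ A)) from hxy) isOpen_compl_singleton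
    obtain ⟨t, htx, htc, htV⟩ := exists_mem_nhds_isClosed_subset (hB.isOpen hV𝔅 |>.mem_nhds hxV)
    obtain ⟨W, hWt, hWo, hxW⟩ := mem_nhds_iff.mp htx
    obtain ⟨U, hU𝔅, hxU, hUW⟩ := hB.exists_subset_of_mem_open hxW hWo
    have hcl : closure U ⊆ V := le_trans (closure_minimal (hUW.trans hWt) htc) htV
    set p : P := ⟨(U, V), hU𝔅, hV𝔅, hcl⟩ with hp
    refine ⟨⇑(g p), ⟨g p, StarAlgebra.subset_adjoin ℂ _ ⟨p, rfl⟩, rfl⟩, ?_⟩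
    have hx0 : g p x = 0 := by
      have := hf0 p (subset_closure hxU)
      simp only [hg, ContinuousMap.comp_apply, ContinuousMap.coe_mk]
      rw [show f p x = 0 from this]
      simp
    have hy1 : g p y = 1 := by
      have := hf1 p (show y ∈ Vᶜ from fun hy => hVsub hy rfl)
      simp only [hg, ContinuousMap.comp_apply, ContinuousMap.coe_mk]
      rw [show f p y = 1 from this]
      simp
    rw [hx0, hy1]
    exact zero_ne_one
  have hSW := ContinuousMap.starSubalgebra_topologicalClosure_eq_top_of_separatesPoints
    (StarAlgebra.adjoin ℂ (Set.range g)) hsep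
  -- carrier of star-adjoin equals carrier of adjoin
  have hcarrier : ((StarAlgebra.adjoin ℂ (Set.range g)) : Set C(characterSpace ℂ A, ℂ)) =
      (Algebra.adjoin ℂ (Set.range g) : Set C(characterSpace ℂ A, ℂ)) := by
    have := StarAlgebra.adjoin_toSubalgebra (R := ℂ) (s := Set.range g)
    rw [hstar_eq] at this
    rw [← this]
    rfl
  -- homeomorphism from isometry
  have hinv : Isometry (Equiv.ofBijective ⇑φ hbij).symm := by
    intro x y
    calc edist ((Equiv.ofBijective ⇑φ hbij).symm x) ((Equiv.ofBijective ⇑φ hbij).symm y)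
        = edist (φ ((Equiv.ofBijective ⇑φ hbij).symm x))
            (φ ((Equiv.ofBijective ⇑φ hbij).symm y)) := (hiso _ _).symm
      _ = edist x y := by
            rw [Equiv.ofBijective_apply_symm_apply ⇑φ hbij x,
              Equiv.ofBijective_apply_symm_apply ⇑φ hbij y]
  set h : A ≃ₜ C(characterSpace ℂ A, ℂ) :=
    { toEquiv := Equiv.ofBijective ⇑φ hbij
      continuous_toFun := hiso.continuous
      continuous_invFun := hinv.continuous } with hh
  -- generation
  have hgen : (Algebra.adjoin ℂ S).topologicalClosure = ⊤ := by
    rw [eq_top_iff]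
    intro a _
    have hmem : φ a ∈ closure ((Algebra.adjoin ℂ (Set.range g) :
        Set C(characterSpace ℂ A, ℂ))) := by
      rw [← hcarrier]
      have : φ a ∈ ((StarAlgebra.adjoin ℂ (Set.range g)).topologicalClosure :
          Set C(characterSpace ℂ A, ℂ)) := by rw [hSW]; trivial
      exact this
    have hmap : (Algebra.adjoin ℂ (Set.range g) : Set C(characterSpace ℂ A, ℂ)) =
        ⇑φ '' (Algebra.adjoin ℂ S : Set A) := by
      rw [← himg, ← AlgHom.map_adjoin]
      rfl
    rw [hmap] at hmem
    have himcl : ⇑φ '' closure (Algebra.adjoin ℂ S : Set A) =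
        closure (⇑φ '' (Algebra.adjoin ℂ S : Set A)) := h.image_closure _
    rw [← himcl] at hmem
    obtain ⟨b, hb, hba⟩ := hmem
    have : b = a := hbij.injective hba
    rw [this] at hb
    exact hb
  -- cardinality
  have hcard : #S ≤ #𝔅 := by
    have h1 : #S ≤ #(Set.range g) := Cardinal.mk_preimage_of_injective _ _ hbij.injective
    have h2 : #(Set.range g) ≤ #P := Cardinal.mk_range_le
    have h3 : #P ≤ #(↥𝔅 × ↥𝔅) := by
      refine Cardinal.mk_le_of_injective (f := fun p : P =>
        ((⟨p.1.1, p.2.1⟩ : ↥𝔅), (⟨p.1.2, p.2.2.1⟩ : ↥𝔅))) ?_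
      rintro ⟨⟨U, V⟩, h⟩ ⟨⟨U', V'⟩, h'⟩ hpq
      simp only [Prod.mk.injEq, Subtype.mk.injEq] at hpq
      simp [Prod.ext_iff, hpq.1, hpq.2]
    have h4 : #(↥𝔅 × ↥𝔅) = #𝔅 := by
      rw [Cardinal.mk_prod]
      simp only [Cardinal.lift_id]
      exact Cardinal.mul_eq_self hinf
    exact le_trans h1 (le_trans h2 (le_trans h3 (le_of_eq h4)))
  exact ⟨S, hsa, hgen, hcard⟩

end Aux


/-- **Proposition 3.16.** For a commutative unital C*-algebra `A` that is not finitely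
generated as a C*-algebra, the density character of `A`, the least cardinality of a
self-adjoint generating set of `A` as a C*-algebra, and the weight of the character space
`Δ(A)` all coincide. -/
theorem densityCharacter_eq_genCstar_eq_weight
    {A : Type u} [CommCStarAlgebra A]
    (hfg : ¬ ∃ S : Set A, S.Finite ∧ (∀ a ∈ S, IsSelfAdjoint a) ∧
      (Algebra.adjoin ℂ S).topologicalClosure = ⊤) :
    sInf {c : Cardinal.{u} | ∃ s : Set A, Dense s ∧ Cardinal.mk s = c} =
        sInf {c : Cardinal.{u} | ∃ S : Set A, (∀ a ∈ S, IsSelfAdjoint a) ∧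
          (Algebra.adjoin ℂ S).topologicalClosure = ⊤ ∧ Cardinal.mk S = c} ∧
      sInf {c : Cardinal.{u} | ∃ S : Set A, (∀ a ∈ S, IsSelfAdjoint a) ∧
          (Algebra.adjoin ℂ S).topologicalClosure = ⊤ ∧ Cardinal.mk S = c} =
        sInf {c : Cardinal.{u} | ∃ 𝔅 : Set (Set (characterSpace ℂ A)),
          TopologicalSpace.IsTopologicalBasis 𝔅 ∧ Cardinal.mk 𝔅 = c} := by
  classical
  haveI hnt : Nontrivial A := by
    by_contra h
    rw [not_nontrivial_iff_subsingleton] at h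
    refine hfg ⟨∅, Set.finite_empty, by simp, ?_⟩
    rw [eq_top_iff]
    exact fun a _ => (Subsingleton.elim a 0) ▸
      zero_mem (Algebra.adjoin ℂ (∅ : Set A)).topologicalClosure
  have hnfd : ¬ FiniteDimensional ℂ A := fun h =>
    hfg (@exists_finite_gen_of_finiteDimensional A _ h)
  haveI hXinf : Infinite (characterSpace ℂ A) := by
    by_contra h
    rw [not_infinite_iff_finite] at h
    exact hnfd (finiteDimensional_of_finite_characterSpace h)
  haveI hAinf : Infinite A := Infinite.of_injective _ (algebraMap ℂ A).injective
  set D := {c : Cardinal.{u} | ∃ s : Set A, Dense s ∧ Cardinal.mk s = c} with hD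
  set G := {c : Cardinal.{u} | ∃ S : Set A, (∀ a ∈ S, IsSelfAdjoint a) ∧
      (Algebra.adjoin ℂ S).topologicalClosure = ⊤ ∧ Cardinal.mk S = c} with hG
  set W := {c : Cardinal.{u} | ∃ 𝔅 : Set (Set (characterSpace ℂ A)),
      TopologicalSpace.IsTopologicalBasis 𝔅 ∧ Cardinal.mk 𝔅 = c} with hW
  have hDne : D.Nonempty := ⟨_, Set.univ, dense_univ, rfl⟩
  have hGne : G.Nonempty := by
    obtain ⟨S, h1, h2⟩ := (gen_nonempty (A := A))
    exact ⟨_, S, h1, h2, rfl⟩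
  have hWne : W.Nonempty :=
    ⟨_, _, TopologicalSpace.isTopologicalBasis_opens, rfl⟩
  obtain ⟨s₀, hs₀d, hs₀c⟩ := csInf_mem hDne
  obtain ⟨S₀, hS₀sa, hS₀g, hS₀c⟩ := csInf_mem hGne
  obtain ⟨𝔅₀, h𝔅₀b, h𝔅₀c⟩ := csInf_mem hWne
  have hs₀inf : Cardinal.aleph0 ≤ Cardinal.mk s₀ := by
    refine le_of_not_gt fun h => ?_
    have hfin : s₀.Finite := Cardinal.lt_aleph0_iff_set_finite.mp h
    have : (Set.univ : Set A) = s₀ := by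
      rw [← hs₀d.closure_eq, hfin.isClosed.closure_eq]
    exact Set.infinite_univ (this ▸ hfin)
  have hS₀inf : Cardinal.aleph0 ≤ Cardinal.mk S₀ := by
    refine le_of_not_gt fun h => ?_
    exact hfg ⟨S₀, Cardinal.lt_aleph0_iff_set_finite.mp h, hS₀sa, hS₀g⟩
  have h𝔅₀inf : Cardinal.aleph0 ≤ Cardinal.mk 𝔅₀ := by
    refine le_of_not_gt fun h => ?_
    haveI := finite_of_finite_basis h𝔅₀b (Cardinal.lt_aleph0_iff_set_finite.mp h)
    exact not_finite (characterSpace ℂ A)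
  -- three inequalities
  have hDG : sInf D ≤ sInf G := by
    obtain ⟨s, hsd, hsc⟩ := exists_dense_of_gen S₀ hS₀g hS₀inf
    exact le_trans (csInf_le' ⟨s, hsd, rfl⟩) (hsc.trans (le_of_eq hS₀c))
  have hWD : sInf W ≤ sInf D := by
    obtain ⟨𝔅, h𝔅b, h𝔅c⟩ := exists_basis_of_dense s₀ hs₀d hs₀inf
    exact le_trans (csInf_le' ⟨𝔅, h𝔅b, rfl⟩) (h𝔅c.trans (le_of_eq hs₀c))
  have hGW : sInf G ≤ sInf W := by
    obtain ⟨S, hSsa, hSg, hSc⟩ := exists_gen_of_basis 𝔅₀ h𝔅₀b h𝔅₀inf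
    exact le_trans (csInf_le' ⟨S, hSsa, hSg, rfl⟩) (hSc.trans (le_of_eq h𝔅₀c))
  exact ⟨le_antisymm hDG (hGW.trans hWD), le_antisymm hGW (hWD.trans hDG)⟩
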